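/- Let Φ ∈ ℝ^{n×n} be doubly stochastic with all entries at least a > 0, and m = n·a with 0 < m < 1. Then for any x ∈ ℝⁿ: xᵀΦᵀ(I − J)Φx ≤ (1 − m)²·xᵀ(I − J)x, where J = (1/n)1ₙ1ₙᵀ. -/

import Mathlib

open Matrix

lemma quad_form_aux (n : ℕ) (hn : 0 < n) (J : Matrix (Fin n) (Fin n) ℝ)
    (hJ : J = (1 / (n : ℝ)) • Matrix.of (fun _ _ => (1 : ℝ)))
    (u : Fin n → ℝ) :
    u ⬝ᵥ ((1 - J).mulVec u) = ∑ i, (u i - (∑ k, u k) / n) ^ 2 := by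
  have hn' : (0:ℝ) < n := by exact_mod_cast hn
  set c : ℝ := (∑ k, u k) / n with hc
  have hJu : J.mulVec u = fun _ => c := by
    funext i
    simp only [hJ, Matrix.mulVec, dotProduct, Matrix.smul_apply, Matrix.of_apply,
      smul_eq_mul, one_div, mul_one]
    rw [← Finset.mul_sum, hc, div_eq_mul_inv, mul_comm]
  have h1 : (1 - J).mulVec u = fun i => u i - c := by
    rw [Matrix.sub_mulVec, Matrix.one_mulVec, hJu]
    rfl
  have hsum : ∑ i, (u i - c) = 0 := by
    rw [Finset.sum_sub_distrib, Finset.sum_const, Finset.card_univ, Fintype.card_fin,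
      nsmul_eq_mul, hc]
    field_simp
    simp
  rw [h1]
  simp only [dotProduct]
  have : ∀ i : Fin n, u i * (u i - c) = (u i - c) ^ 2 + c * (u i - c) := by
    intro i; ring
  rw [Finset.sum_congr rfl (fun i _ => this i), Finset.sum_add_distrib, ← Finset.mul_sum,
    hsum, mul_zero, add_zero]

theorem stmt_15 (n : ℕ) (hn : 0 < n) (Φ : Matrix (Fin n) (Fin n) ℝ)
    (hpos : ∀ i j, 0 ≤ Φ i j)
    (hrow : ∀ i, ∑ j, Φ i j = 1)
    (hcol : ∀ j, ∑ i, Φ i j = 1)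
    (a : ℝ) (ha : 0 < a) (hent : ∀ i j, a ≤ Φ i j)
    (m : ℝ) (hm : m = n * a) (hm0 : 0 < m) (hm1 : m < 1)
    (J : Matrix (Fin n) (Fin n) ℝ)
    (hJ : J = (1 / (n : ℝ)) • Matrix.of (fun _ _ => (1 : ℝ)))
    (x : Fin n → ℝ) :
    x ⬝ᵥ ((Φᵀ * (1 - J) * Φ).mulVec x) ≤ (1 - m) ^ 2 * (x ⬝ᵥ ((1 - J).mulVec x)) := by
  have hn' : (0:ℝ) < n := by exact_mod_cast hn
  have hm' : (0:ℝ) < 1 - m := by linarith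
  set c : ℝ := (∑ k, x k) / n with hc
  set u : Fin n → ℝ := Φ.mulVec x with hu
  set y : Fin n → ℝ := fun j => x j - c with hy
  have h1 : x ⬝ᵥ ((Φᵀ * (1 - J) * Φ).mulVec x) = u ⬝ᵥ ((1 - J).mulVec u) := by
    rw [Matrix.mul_assoc, ← Matrix.mulVec_mulVec, Matrix.dotProduct_mulVec,
      Matrix.vecMul_transpose, ← Matrix.mulVec_mulVec]
  have hmean : ∑ i, u i = ∑ k, x k := by
    simp only [hu, Matrix.mulVec, dotProduct]
    rw [Finset.sum_comm]
    have : ∀ j : Fin n, ∑ i, Φ i j * x j = x j := by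
      intro j; rw [← Finset.sum_mul, hcol, one_mul]
    simp [this]
  rw [h1, quad_form_aux n hn J hJ u, quad_form_aux n hn J hJ x, hmean, ← hc]
  have hsy : ∑ j, y j = 0 := by
    simp only [hy]
    rw [Finset.sum_sub_distrib, Finset.sum_const, Finset.card_univ, Fintype.card_fin,
      nsmul_eq_mul, hc]
    field_simp
    simp
  have key : ∀ i, u i - c = ∑ j, (Φ i j - a) * y j := by
    intro i
    have e1 : ∑ j, (Φ i j - a) * y j = ∑ j, Φ i j * y j - a * ∑ j, y j := by
      rw [Finset.mul_sum, ← Finset.sum_sub_distrib]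
      exact Finset.sum_congr rfl fun j _ => by ring
    have e2 : ∑ j, Φ i j * y j = u i - c := by
      have e3 : ∀ j : Fin n, Φ i j * y j = Φ i j * x j - c * Φ i j := by
        intro j; simp only [hy]; ring
      rw [Finset.sum_congr rfl fun j _ => e3 j, Finset.sum_sub_distrib, ← Finset.mul_sum,
        hrow, mul_one]
      simp [hu, Matrix.mulVec, dotProduct]
    rw [e1, hsy, mul_zero, sub_zero, e2]
  set P : Fin n → Fin n → ℝ := fun i j => (Φ i j - a) / (1 - m) with hP
  have hkey2 : ∀ i, u i - c = (1 - m) * ∑ j, P i j * y j := by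
    intro i
    rw [key i, Finset.mul_sum]
    refine Finset.sum_congr rfl fun j _ => ?_
    simp only [hP]
    field_simp
  have hPnn : ∀ i j, 0 ≤ P i j := fun i j =>
    div_nonneg (by linarith [hent i j]) (le_of_lt hm')
  have hProw : ∀ i, ∑ j, P i j = 1 := by
    intro i
    simp only [hP]
    rw [← Finset.sum_div, Finset.sum_sub_distrib, hrow, Finset.sum_const, Finset.card_univ,
      Fintype.card_fin, nsmul_eq_mul, ← hm, div_self (ne_of_gt hm')]
  have hPcol : ∀ j, ∑ i, P i j = 1 := by
    intro j
    simp only [hP]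
    rw [← Finset.sum_div, Finset.sum_sub_distrib, hcol, Finset.sum_const, Finset.card_univ,
      Fintype.card_fin, nsmul_eq_mul, ← hm, div_self (ne_of_gt hm')]
  have contr : ∑ i, (∑ j, P i j * y j) ^ 2 ≤ ∑ j, y j ^ 2 := by
    have step : ∀ i, (∑ j, P i j * y j) ^ 2 ≤ ∑ j, P i j * y j ^ 2 := by
      intro i
      have cs := Finset.sum_mul_sq_le_sq_mul_sq Finset.univ
        (fun j => Real.sqrt (P i j)) (fun j => Real.sqrt (P i j) * y j)
      have e1 : ∀ j : Fin n, Real.sqrt (P i j) * (Real.sqrt (P i j) * y j) = P i j * y j := by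
        intro j; rw [← mul_assoc, Real.mul_self_sqrt (hPnn i j)]
      have e2 : ∀ j : Fin n, Real.sqrt (P i j) ^ 2 = P i j := by
        intro j; exact Real.sq_sqrt (hPnn i j)
      have e3 : ∀ j : Fin n, (Real.sqrt (P i j) * y j) ^ 2 = P i j * y j ^ 2 := by
        intro j; rw [mul_pow, e2]
      rw [Finset.sum_congr rfl fun j _ => e1 j, Finset.sum_congr rfl fun j _ => e2 j,
        Finset.sum_congr rfl fun j _ => e3 j, hProw i, one_mul] at cs
      exact cs
    calc ∑ i, (∑ j, P i j * y j) ^ 2 ≤ ∑ i, ∑ j, P i j * y j ^ 2 :=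
          Finset.sum_le_sum fun i _ => step i
      _ = ∑ j, y j ^ 2 := by
          rw [Finset.sum_comm]
          refine Finset.sum_congr rfl fun j _ => ?_
          rw [← Finset.sum_mul, hPcol j, one_mul]
  have e4 : ∑ i, (u i - c) ^ 2 = (1 - m) ^ 2 * ∑ i, (∑ j, P i j * y j) ^ 2 := by
    rw [Finset.mul_sum]
    refine Finset.sum_congr rfl fun i _ => ?_
    rw [hkey2 i]; ring
  have e5 : ∑ j, (x j - c) ^ 2 = ∑ j, y j ^ 2 := rfl
  rw [e4, e5]
  exact mul_le_mul_of_nonneg_left contr (by positivity)
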